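/- Fix α > 0, γ > 0 and integers 0 ≤ i₁ < i₂. For ρ = γα/log α, the product ∏_{i=i₁+1}^{i₂} (iα)/(iα+ρ) equals exp(−(γ/log α) ∑_{i=i₁+1}^{i₂} 1/i) + O(1/(log α)²) as α → ∞, uniformly in i₁ < i₂ ≤ ⌊2α⌋; more precisely, the absolute difference between the product and exp(−(γ/log α) ∑_{i=i₁+1}^{i₂} 1/i) is bounded by C(γ)/(log α)² for α large, for a constant C(γ) independent of i₁, i₂. -/

import Mathlib

open Finset Real

lemma sum_inv_sq_le_aux : ∀ n : ℕ, 1 ≤ n → ∑ i ∈ Finset.Icc 1 n, (1 : ℝ) / (i:ℝ)^2 ≤ 2 - 1/(n:ℝ) := by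
  intro n hn
  induction n, hn using Nat.le_induction with
  | base => norm_num
  | succ n hn ih =>
    rw [Finset.sum_Icc_succ_top (by omega)]
    have h1 : (0:ℝ) < n := by exact_mod_cast hn
    have h2 : (0:ℝ) < (n:ℝ)+1 := by linarith
    have key : (1:ℝ)/((n:ℝ)+1)^2 ≤ 1/(n:ℝ) - 1/((n:ℝ)+1) := by
      rw [div_sub_div _ _ (ne_of_gt h1) (ne_of_gt h2), div_le_div_iff₀ (by positivity) (by positivity)]
      nlinarith
    push_cast
    linarith

lemma sum_inv_sq_le (n : ℕ) : ∑ i ∈ Finset.Icc 1 n, (1 : ℝ) / (i:ℝ)^2 ≤ 2 := by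
  cases n with
  | zero => simp
  | succ m =>
    have := sum_inv_sq_le_aux (m+1) (by omega)
    have h : (0:ℝ) < ((m+1:ℕ):ℝ) := by positivity
    calc ∑ i ∈ Finset.Icc 1 (m+1), (1 : ℝ) / (i:ℝ)^2 ≤ 2 - 1/((m+1:ℕ):ℝ) := this
    _ ≤ 2 := by have : (0:ℝ) ≤ 1/((m+1:ℕ):ℝ) := by positivity
                linarith

lemma log_one_add_le {x : ℝ} (hx : 0 ≤ x) : Real.log (1+x) ≤ x := by
  have := Real.log_le_sub_one_of_pos (show (0:ℝ) < 1 + x by linarith)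
  linarith

lemma le_log_one_add {x : ℝ} (hx : 0 ≤ x) : x - x^2 ≤ Real.log (1+x) := by
  have h1 : (0:ℝ) < 1 + x := by linarith
  have h2 := Real.log_le_sub_one_of_pos (show (0:ℝ) < (1+x)⁻¹ by positivity)
  rw [Real.log_inv] at h2
  have h3 : 1 - (1+x)⁻¹ ≤ Real.log (1+x) := by linarith
  have h4 : x - x^2 ≤ 1 - (1+x)⁻¹ := by
    have h5 : (1+x)⁻¹ * (1+x) = 1 := inv_mul_cancel₀ (ne_of_gt h1)
    nlinarith [inv_nonneg.mpr (le_of_lt h1)]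
  linarith

lemma exp_neg_lip {a b : ℝ} (ha : 0 ≤ a) (hb : 0 ≤ b) :
    |Real.exp (-a) - Real.exp (-b)| ≤ |a - b| := by
  wlog h : b ≤ a generalizing a b
  · rw [abs_sub_comm, abs_sub_comm a b]; exact this hb ha (le_of_not_ge h)
  have hea : Real.exp (-a) ≤ Real.exp (-b) := Real.exp_le_exp.mpr (by linarith)
  rw [abs_of_nonpos (by linarith), abs_of_nonneg (by linarith)]
  have h1 : Real.exp (-a) = Real.exp (-b) * Real.exp (b - a) := by
    rw [← Real.exp_add]; ring_nf
  have h2 : Real.exp (-b) ≤ 1 := Real.exp_le_one_iff.mpr (by linarith)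
  have h3 : (b - a) + 1 ≤ Real.exp (b - a) := Real.add_one_le_exp _
  have h4 : Real.exp (b - a) ≤ 1 := Real.exp_le_one_iff.mpr (by linarith)
  nlinarith [Real.exp_pos (-b)]

theorem yule_mark_product_approx (γ : ℝ) (hγ : 0 < γ) :
    ∃ C > (0 : ℝ), ∃ A : ℝ, ∀ α : ℝ, A ≤ α → ∀ i₁ i₂ : ℕ, i₁ < i₂ → i₂ ≤ ⌊2 * α⌋₊ →
      |(∏ i ∈ Finset.Icc (i₁ + 1) i₂,
            ((i : ℝ) * α) / ((i : ℝ) * α + γ * α / Real.log α))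
          - Real.exp (-(γ / Real.log α) * ∑ i ∈ Finset.Icc (i₁ + 1) i₂, (1 : ℝ) / (i : ℝ))|
        ≤ C / (Real.log α) ^ 2 := by
  refine ⟨2 * γ^2, by positivity, 3, ?_⟩
  intro α hα i₁ i₂ hlt hub
  have hα0 : (0:ℝ) < α := by linarith
  have hL : 1 ≤ Real.log α := by
    rw [Real.le_log_iff_exp_le hα0]
    calc Real.exp 1 ≤ 2.7182818286 := le_of_lt Real.exp_one_lt_d9
    _ ≤ α := by linarith
  have hL0 : (0:ℝ) < Real.log α := by linarith
  set L := Real.log α with hLdef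
  set c := γ / L with hcdef
  have hc : 0 < c := div_pos hγ hL0
  -- rewrite each factor
  have hfac : ∀ i ∈ Finset.Icc (i₁ + 1) i₂,
      ((i : ℝ) * α) / ((i : ℝ) * α + γ * α / L) = Real.exp (-(Real.log (1 + c / i))) := by
    intro i hi
    have hi1 : 1 ≤ i := by
      simp only [Finset.mem_Icc] at hi; omega
    have hi0 : (0:ℝ) < (i:ℝ) := by exact_mod_cast Nat.lt_of_lt_of_le Nat.zero_lt_one hi1
    have hpos : (0:ℝ) < 1 + c / i := by positivity
    rw [Real.exp_neg, Real.exp_log hpos]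
    have hden : (i:ℝ)*α + γ*α/L = ((i:ℝ)*α)*(1 + c/(i:ℝ)) := by
      rw [hcdef]; field_simp
    rw [hden, div_mul_cancel_left₀ (by positivity)]
  rw [Finset.prod_congr rfl hfac, ← Real.exp_sum]
  -- S and T
  set S := ∑ i ∈ Finset.Icc (i₁ + 1) i₂, Real.log (1 + c / i) with hS
  set T := ∑ i ∈ Finset.Icc (i₁ + 1) i₂, c / i with hT
  have hnonneg : ∀ i ∈ Finset.Icc (i₁ + 1) i₂, (0:ℝ) ≤ c / i := by
    intro i hi; positivity
  have hS0 : 0 ≤ S := Finset.sum_nonneg (fun i hi => by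
    have : (0:ℝ) ≤ c / i := hnonneg i hi
    have := log_one_add_le this -- not needed; need log nonneg
    exact Real.log_nonneg (by linarith [hnonneg i hi]))
  have hT0 : 0 ≤ T := Finset.sum_nonneg hnonneg
  have hsum_eq : -(γ / L) * ∑ i ∈ Finset.Icc (i₁ + 1) i₂, (1 : ℝ) / (i : ℝ) = -T := by
    rw [hT, neg_mul, neg_inj, Finset.mul_sum]
    refine Finset.sum_congr rfl (fun i hi => ?_)
    rw [hcdef]; ring
  rw [hsum_eq]
  have hST : S ≤ T := Finset.sum_le_sum (fun i hi => by
    have h := hnonneg i hi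
    have := log_one_add_le h
    linarith)
  have h1 : T - S ≤ ∑ i ∈ Finset.Icc (i₁+1) i₂, (c/(i:ℝ))^2 := by
    rw [hT, hS, ← Finset.sum_sub_distrib]
    refine Finset.sum_le_sum (fun i hi => ?_)
    have h := hnonneg i hi
    have := le_log_one_add h
    linarith
  have h2 : ∑ i ∈ Finset.Icc (i₁+1) i₂, (c/(i:ℝ))^2
      = c^2 * ∑ i ∈ Finset.Icc (i₁+1) i₂, (1:ℝ)/(i:ℝ)^2 := by
    rw [Finset.mul_sum]
    refine Finset.sum_congr rfl (fun i hi => ?_)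
    rw [div_pow]; ring
  have h3 : ∑ i ∈ Finset.Icc (i₁+1) i₂, (1:ℝ)/(i:ℝ)^2 ≤ 2 := by
    refine le_trans (Finset.sum_le_sum_of_subset_of_nonneg ?_ ?_) (sum_inv_sq_le i₂)
    · exact Finset.Icc_subset_Icc_left (by omega)
    · intro i _ _; positivity
  have hc2 : (0:ℝ) ≤ c^2 := sq_nonneg c
  have hnegS : ∑ x ∈ Finset.Icc (i₁+1) i₂, -Real.log (1 + c/(x:ℝ)) = -S := by
    rw [hS]; exact Finset.sum_neg_distrib _
  rw [hnegS]
  calc |Real.exp (-S) - Real.exp (-T)| ≤ |S - T| := exp_neg_lip hS0 hT0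
    _ = T - S := by rw [abs_sub_comm, abs_of_nonneg (by linarith)]
    _ ≤ c^2 * ∑ i ∈ Finset.Icc (i₁+1) i₂, (1:ℝ)/(i:ℝ)^2 := by rw [← h2]; exact h1
    _ ≤ c^2 * 2 := by nlinarith
    _ ≤ 2 * γ^2 / L^2 := le_of_eq (by rw [hcdef, div_pow]; ring)
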